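/- Every minimal non-sofic group G is perfect, i.e., G equals its commutator subgroup [G,G]. -/

import Mathlib

/-- The normalized Hamming distance between two permutations of `Fin n`:
the number of points where they differ, divided by `n`. -/
noncomputable def permHammingDist {n : ℕ} (σ τ : Equiv.Perm (Fin n)) : ℝ :=
  ((Finset.univ.filter fun i => σ i ≠ τ i).card : ℝ) / n

/-- A group `G` is sofic if for every finite subset `F ⊆ G` and every `ε > 0` there exist
`n ≥ 1` and a map `θ` from `F` to `Sym(Fin n)` (extended to all of `G`) such that:
(i) `θ` is an `ε`-approximate homomorphism on `F`;
(ii) `θ` almost sends the identity to the identity;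
(iii) distinct elements of `F` are sent to permutations at Hamming distance at least `1/4`. -/
def IsSofic (G : Type*) [Group G] : Prop :=
  ∀ (F : Finset G) (ε : ℝ), 0 < ε →
    ∃ n : ℕ, 1 ≤ n ∧ ∃ θ : G → Equiv.Perm (Fin n),
      (∀ g h : G, g ∈ F → h ∈ F → g * h ∈ F →
        permHammingDist (θ g * θ h) (θ (g * h)) < ε) ∧
      ((1 : G) ∈ F → permHammingDist (θ 1) 1 < ε) ∧
      (∀ x y : G, x ∈ F → y ∈ F → x ≠ y → 1 / 4 ≤ permHammingDist (θ x) (θ y))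

/-- A group is minimal non-sofic if it is not sofic but every proper subgroup is sofic. -/
def IsMinimalNonSofic (G : Type*) [Group G] : Prop :=
  ¬ IsSofic G ∧ ∀ H : Subgroup G, H ≠ ⊤ → IsSofic H



open Finset

lemma card_filter_prod {n : ℕ} {Q : Type*} [Fintype Q] (P : Fin n × Q → Prop)
    [DecidablePred P] :
    (Finset.univ.filter P).card = ∑ q : Q, (Finset.univ.filter fun i => P (i, q)).card := by
  simp only [Finset.card_filter]
  rw [Fintype.sum_prod_type_right]

lemma permCongr_mul {α : Type*} {m : ℕ} (e : α ≃ Fin m) (σ τ : Equiv.Perm α) :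
    e.permCongr (σ * τ) = e.permCongr σ * e.permCongr τ := by
  ext i
  simp [Equiv.permCongr_apply, Equiv.Perm.mul_apply]

lemma permHammingDist_permCongr {α : Type*} [Fintype α] [DecidableEq α] {m : ℕ} (e : α ≃ Fin m)
    (σ τ : Equiv.Perm α) :
    permHammingDist (e.permCongr σ) (e.permCongr τ)
      = ((Finset.univ.filter fun a => σ a ≠ τ a).card : ℝ) / m := by
  unfold permHammingDist
  congr 2
  refine Finset.card_bij (fun i _ => e.symm i) ?_ ?_ ?_
  · intro i hi
    simp only [mem_filter_univ, mem_filter, mem_univ, true_and, Equiv.permCongr_apply] at hi ⊢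
    intro h
    exact (Finset.mem_filter.1 hi).2 (by rw [h])
  · intro a _ b _ h
    exact e.symm.injective h
  · intro a ha
    refine ⟨e a, ?_, by simp⟩
    simp only [mem_filter_univ, mem_filter, mem_univ, true_and, Equiv.permCongr_apply] at ha ⊢
    simpa using fun h => ha (e.injective h)


lemma permHammingDist_eq_natCard {n : ℕ} (σ τ : Equiv.Perm (Fin n)) :
    permHammingDist σ τ = (Nat.card {i : Fin n // σ i ≠ τ i} : ℝ) / n := by
  unfold permHammingDist
  congr 2
  classical
  rw [Nat.card_eq_fintype_card, Fintype.card_subtype]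

lemma natCard_prod {n : ℕ} {Q : Type*} [Fintype Q] (P : Fin n × Q → Prop) :
    Nat.card {p : Fin n × Q // P p} = ∑ q : Q, Nat.card {i : Fin n // P (i, q)} := by
  classical
  simp only [Nat.card_eq_fintype_card, Fintype.card_subtype]
  exact card_filter_prod P

lemma permHammingDist_permCongr' {α : Type*} [Fintype α] {m : ℕ} (e : α ≃ Fin m)
    (σ τ : Equiv.Perm α) :
    permHammingDist (e.permCongr σ) (e.permCongr τ)
      = (Nat.card {a : α // σ a ≠ τ a} : ℝ) / m := by
  classical
  rw [permHammingDist_permCongr e σ τ]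
  congr 2
  rw [Nat.card_eq_fintype_card, Fintype.card_subtype]

section Ext
variable {G : Type*} [Group G] (N : Subgroup G) [N.Normal]

noncomputable def coc (g : G) (q : G ⧸ N) : N :=
  ⟨(Quotient.out ((g : G ⧸ N) * q))⁻¹ * g * Quotient.out q, by
    rw [← QuotientGroup.eq_one_iff]
    simp only [QuotientGroup.mk_mul, QuotientGroup.mk_inv, QuotientGroup.out_eq']
    group⟩

lemma coc_cocycle (g h : G) (q : G ⧸ N) :
    coc N (g * h) q = coc N g ((h : G ⧸ N) * q) * coc N h q := by
  have hq : ((g * h : G) : G ⧸ N) * q = (g : G ⧸ N) * ((h : G ⧸ N) * q) := by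
    rw [QuotientGroup.mk_mul, mul_assoc]
  apply Subtype.ext
  simp only [coc, Subgroup.coe_mul, hq]
  group

lemma coc_one (q : G ⧸ N) : coc N 1 q = 1 := by
  have hq : ((1 : G) : G ⧸ N) * q = q := by
    rw [QuotientGroup.mk_one, one_mul]
  apply Subtype.ext
  simp only [coc, hq, Subgroup.coe_one, mul_one, one_mul]
  group

lemma coc_inj {x y : G} (q : G ⧸ N) (hxy : (x : G ⧸ N) = (y : G ⧸ N))
    (h : coc N x q = coc N y q) : x = y := by
  have := congrArg (Subtype.val) h
  simp only [coc, hxy] at this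
  exact mul_left_cancel (mul_right_cancel this)

end Ext

section Ext2
variable {G : Type*} [Group G] (N : Subgroup G) [N.Normal]

noncomputable def bigPerm {n : ℕ} (φ : N → Equiv.Perm (Fin n)) (g : G) :
    Equiv.Perm (Fin n × (G ⧸ N)) where
  toFun p := (φ (coc N g p.2) p.1, (g : G ⧸ N) * p.2)
  invFun p := ((φ (coc N g (((g : G ⧸ N))⁻¹ * p.2))).symm p.1, ((g : G ⧸ N))⁻¹ * p.2)
  left_inv p := by
    obtain ⟨i, q⟩ := p
    simp [inv_mul_cancel_left]
  right_inv p := by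
    obtain ⟨i, q⟩ := p
    simp [mul_inv_cancel_left]

@[simp] lemma bigPerm_apply {n : ℕ} (φ : N → Equiv.Perm (Fin n)) (g : G) (i : Fin n)
    (q : G ⧸ N) : bigPerm N φ g (i, q) = (φ (coc N g q) i, (g : G ⧸ N) * q) := rfl

end Ext2

lemma isSofic_of_normal {G : Type*} [Group G] (N : Subgroup G) [N.Normal]
    [Finite (G ⧸ N)] (hN : IsSofic N) : IsSofic G := by
  classical
  intro F ε hε
  letI : Fintype (G ⧸ N) := Fintype.ofFinite _
  set F' : Finset N :=
    ((F ×ˢ (Finset.univ : Finset (G ⧸ N))).image fun p => coc N p.1 p.2)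
      ∪ ((F ×ˢ F ×ˢ (Finset.univ : Finset (G ⧸ N))).image fun p => coc N (p.1 * p.2.1) p.2.2)
      ∪ {1} with hF'
  obtain ⟨n, hn, φ, hφmul, hφone, hφsep⟩ := hN F' ε hε
  have hmemc : ∀ g ∈ F, ∀ q : G ⧸ N, coc N g q ∈ F' := by
    intro g hg q
    refine Finset.mem_union_left _ (Finset.mem_union_left _ ?_)
    exact Finset.mem_image.2 ⟨(g, q), by simp [hg], rfl⟩
  have hmemc2 : ∀ g ∈ F, ∀ h ∈ F, ∀ q : G ⧸ N, coc N (g * h) q ∈ F' := by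
    intro g hg h hh q
    refine Finset.mem_union_left _ (Finset.mem_union_right _ ?_)
    exact Finset.mem_image.2 ⟨(g, h, q), by simp [hg, hh], rfl⟩
  have h1F' : (1 : N) ∈ F' := Finset.mem_union_right _ (Finset.mem_singleton_self _)
  set m := n * Fintype.card (G ⧸ N) with hm
  have hQpos : 0 < Fintype.card (G ⧸ N) := Fintype.card_pos
  have hm1 : 1 ≤ m := Nat.one_le_iff_ne_zero.2 (Nat.mul_ne_zero (by omega) (by omega))
  have hnR : (0 : ℝ) < n := by exact_mod_cast hn
  have hmR : (0 : ℝ) < m := by exact_mod_cast hm1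
  have e : (Fin n × (G ⧸ N)) ≃ Fin m := Fintype.equivFinOfCardEq (by simp [hm])
  refine ⟨m, hm1, fun g => e.permCongr (bigPerm N φ g), ?_, ?_, ?_⟩
  · -- approximate multiplicativity
    intro g h hg hh hgh
    rw [← permCongr_mul e, permHammingDist_permCongr' e, natCard_prod, div_lt_iff₀ hmR]
    have key : ∀ q : G ⧸ N,
        (Nat.card {i : Fin n //
          (bigPerm N φ g * bigPerm N φ h) (i, q) ≠ bigPerm N φ (g * h) (i, q)} : ℝ)
          < ε * n := by
      intro q
      have hcard : Nat.card {i : Fin n //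
            (bigPerm N φ g * bigPerm N φ h) (i, q) ≠ bigPerm N φ (g * h) (i, q)}
          = Nat.card {i : Fin n //
            (φ (coc N g ((h : G ⧸ N) * q)) * φ (coc N h q)) i
              ≠ φ (coc N g ((h : G ⧸ N) * q) * coc N h q) i} := by
        apply Nat.card_congr
        apply Equiv.subtypeEquivRight
        intro i
        rw [← coc_cocycle]
        simp [Prod.ext_iff, mul_assoc, Equiv.Perm.mul_apply]
      rw [hcard]
      have := hφmul (coc N g ((h : G ⧸ N) * q)) (coc N h q)
        (hmemc g hg _) (hmemc h hh _)
        (by rw [← coc_cocycle]; exact hmemc2 g hg h hh q)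
      rw [permHammingDist_eq_natCard, div_lt_iff₀ hnR] at this
      exact this
    calc ((∑ q : G ⧸ N, Nat.card {i : Fin n //
            (bigPerm N φ g * bigPerm N φ h) (i, q) ≠ bigPerm N φ (g * h) (i, q)} : ℕ) : ℝ)
        = ∑ q : G ⧸ N, (Nat.card {i : Fin n //
            (bigPerm N φ g * bigPerm N φ h) (i, q) ≠ bigPerm N φ (g * h) (i, q)} : ℝ) := by
          push_cast; ring
      _ < ∑ _q : G ⧸ N, ε * n :=
          Finset.sum_lt_sum_of_nonempty Finset.univ_nonempty fun q _ => key q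
      _ = ε * m := by
          rw [Finset.sum_const, Finset.card_univ, nsmul_eq_mul, hm]
          push_cast; ring
  · -- identity
    intro h1
    have hone : (1 : Equiv.Perm (Fin m)) = e.permCongr 1 := by
      ext i; simp [Equiv.permCongr_apply]
    rw [hone, permHammingDist_permCongr' e, natCard_prod, div_lt_iff₀ hmR]
    have key : ∀ q : G ⧸ N,
        (Nat.card {i : Fin n // bigPerm N φ 1 (i, q) ≠ (1 : Equiv.Perm (Fin n × (G ⧸ N))) (i, q)} : ℝ)
          < ε * n := by
      intro q
      have hcard : Nat.card {i : Fin n // bigPerm N φ 1 (i, q) ≠ (1 : Equiv.Perm (Fin n × (G ⧸ N))) (i, q)}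
          = Nat.card {i : Fin n // φ (1 : N) i ≠ (1 : Equiv.Perm (Fin n)) i} := by
        apply Nat.card_congr
        apply Equiv.subtypeEquivRight
        intro i
        simp [Prod.ext_iff, coc_one]
      rw [hcard]
      have := hφone h1F'
      rw [permHammingDist_eq_natCard, div_lt_iff₀ hnR] at this
      exact this
    calc ((∑ q : G ⧸ N, Nat.card {i : Fin n //
            bigPerm N φ 1 (i, q) ≠ (1 : Equiv.Perm (Fin n × (G ⧸ N))) (i, q)} : ℕ) : ℝ)
        = ∑ q : G ⧸ N, (Nat.card {i : Fin n //
            bigPerm N φ 1 (i, q) ≠ (1 : Equiv.Perm (Fin n × (G ⧸ N))) (i, q)} : ℝ) := by push_cast; ring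
      _ < ∑ _q : G ⧸ N, ε * n :=
          Finset.sum_lt_sum_of_nonempty Finset.univ_nonempty fun q _ => key q
      _ = ε * m := by
          rw [Finset.sum_const, Finset.card_univ, nsmul_eq_mul, hm]
          push_cast; ring
  · -- separation
    intro x y hx hy hxy
    rw [permHammingDist_permCongr' e, natCard_prod, le_div_iff₀ hmR]
    by_cases hπ : (x : G ⧸ N) = (y : G ⧸ N)
    · have key : ∀ q : G ⧸ N, (n : ℝ) / 4
          ≤ Nat.card {i : Fin n // bigPerm N φ x (i, q) ≠ bigPerm N φ y (i, q)} := by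
        intro q
        have hne : coc N x q ≠ coc N y q := fun h => hxy (coc_inj N q hπ h)
        have := hφsep _ _ (hmemc x hx q) (hmemc y hy q) hne
        rw [permHammingDist_eq_natCard, le_div_iff₀ hnR] at this
        have hsub : Nat.card {i : Fin n // φ (coc N x q) i ≠ φ (coc N y q) i}
            ≤ Nat.card {i : Fin n // bigPerm N φ x (i, q) ≠ bigPerm N φ y (i, q)} := by
          apply Nat.card_le_card_of_injective
            (fun a => ⟨a.1, by simp [Prod.ext_iff]; intro h _; exact absurd h a.2⟩)
          intro a b hab
          exact Subtype.ext (by simpa using congrArg Subtype.val hab)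
        calc (n : ℝ) / 4 = 1 / 4 * n := by ring
          _ ≤ Nat.card {i : Fin n // φ (coc N x q) i ≠ φ (coc N y q) i} := this
          _ ≤ _ := by exact_mod_cast hsub
      calc (1 : ℝ) / 4 * m = ∑ _q : G ⧸ N, (n : ℝ) / 4 := by
            rw [Finset.sum_const, Finset.card_univ, nsmul_eq_mul, hm]
            push_cast; ring
        _ ≤ ∑ q : G ⧸ N, (Nat.card {i : Fin n //
              bigPerm N φ x (i, q) ≠ bigPerm N φ y (i, q)} : ℝ) :=
            Finset.sum_le_sum fun q _ => key q
        _ = _ := by push_cast; ring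
    · have key : ∀ q : G ⧸ N,
          Nat.card {i : Fin n // bigPerm N φ x (i, q) ≠ bigPerm N φ y (i, q)} = n := by
        intro q
        have : ∀ i : Fin n, bigPerm N φ x (i, q) ≠ bigPerm N φ y (i, q) := by
          intro i h
          simp only [bigPerm_apply, Prod.ext_iff] at h
          exact hπ (mul_right_cancel h.2)
        rw [Nat.card_congr (Equiv.subtypeUnivEquiv this), Nat.card_eq_fintype_card,
          Fintype.card_fin]
      have : ∑ q : G ⧸ N, Nat.card {i : Fin n //
          bigPerm N φ x (i, q) ≠ bigPerm N φ y (i, q)} = m := by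
        rw [Finset.sum_congr rfl fun q _ => key q]
        simp [hm, mul_comm]
      rw [this]
      nlinarith [hmR]




lemma exists_approx_of_subgroup {G : Type*} [Group G] (H : Subgroup G) (hH : IsSofic H)
    (F : Finset G) (hF : ∀ g ∈ F, g ∈ H) (ε : ℝ) (hε : 0 < ε) :
    ∃ n : ℕ, 1 ≤ n ∧ ∃ θ : G → Equiv.Perm (Fin n),
      (∀ g h : G, g ∈ F → h ∈ F → g * h ∈ F →
        permHammingDist (θ g * θ h) (θ (g * h)) < ε) ∧
      ((1 : G) ∈ F → permHammingDist (θ 1) 1 < ε) ∧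
      (∀ x y : G, x ∈ F → y ∈ F → x ≠ y → 1 / 4 ≤ permHammingDist (θ x) (θ y)) := by
  classical
  set FH : Finset H := F.attach.image (fun x => (⟨x.1, hF x.1 x.2⟩ : H)) with hFH
  obtain ⟨n, hn, θH, hmul, hone, hsep⟩ := hH FH ε hε
  have hmem : ∀ g (hg : g ∈ F), (⟨g, hF g hg⟩ : H) ∈ FH := fun g hg =>
    Finset.mem_image.2 ⟨⟨g, hg⟩, Finset.mem_attach _ _, rfl⟩
  refine ⟨n, hn, fun g => if h : g ∈ H then θH ⟨g, h⟩ else 1, ?_, ?_, ?_⟩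
  · intro g h hg hh hgh
    simp only [dif_pos (hF g hg), dif_pos (hF h hh), dif_pos (hF _ hgh)]
    have hprod : (⟨g, hF g hg⟩ * ⟨h, hF h hh⟩ : H) = ⟨g * h, hF _ hgh⟩ := Subtype.ext rfl
    have := hmul ⟨g, hF g hg⟩ ⟨h, hF h hh⟩ (hmem g hg) (hmem h hh)
      (by rw [hprod]; exact hmem _ hgh)
    rwa [hprod] at this
  · intro h1
    simp only [dif_pos (one_mem H)]
    have hone' : (⟨(1 : G), one_mem H⟩ : H) = (1 : H) := rfl
    rw [hone']
    exact hone (by rw [← hone']; exact hone' ▸ hmem 1 h1)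
  · intro x y hx hy hxy
    simp only [dif_pos (hF x hx), dif_pos (hF y hy)]
    exact hsep _ _ (hmem x hx) (hmem y hy) fun h => hxy (congrArg Subtype.val h)

open scoped commutatorElement in
lemma exists_finite_quotient {G : Type*} [Group G] (F : Finset G)
    (hcl : Subgroup.closure (F : Set G) = ⊤) (hne : commutator G ≠ ⊤) :
    ∃ M : Subgroup G, M ≠ ⊤ ∧ ∃ _ : M.Normal, Finite (G ⧸ M) := by
  classical
  -- Zorn: a maximal element of {H | commutator G ≤ H, H ≠ ⊤}
  set s : Set (Subgroup G) := {H | commutator G ≤ H ∧ H ≠ ⊤} with hs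
  have hzorn : ∃ M, commutator G ≤ M ∧ Maximal (· ∈ s) M := by
    apply zorn_le_nonempty₀ s ?_ (commutator G) ⟨le_rfl, hne⟩
    intro c hcs hchain y hy
    refine ⟨sSup c, ⟨le_trans (hcs hy).1 (le_sSup hy), ?_⟩, fun z hz => le_sSup hz⟩
    intro htop
    have hmem : ∀ S : Finset G, ∃ H ∈ c, ∀ f ∈ S, f ∈ H := by
      intro S
      induction S using Finset.induction_on with
      | empty => exact ⟨y, hy, by simp⟩
      | @insert f S hfS ih =>
        obtain ⟨H, hHc, hH⟩ := ih
        have hf : f ∈ sSup c := htop ▸ Subgroup.mem_top f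
        obtain ⟨H', hH'c, hfH'⟩ :=
          (Subgroup.mem_sSup_of_directedOn ⟨y, hy⟩ hchain.directedOn).1 hf
        rcases hchain.total hHc hH'c with hle | hle
        · exact ⟨H', hH'c, fun x hx => by
            rcases Finset.mem_insert.1 hx with rfl | hx
            · exact hfH'
            · exact hle (hH x hx)⟩
        · exact ⟨H, hHc, fun x hx => by
            rcases Finset.mem_insert.1 hx with rfl | hx
            · exact hle hfH'
            · exact hH x hx⟩
    obtain ⟨H, hHc, hH⟩ := hmem F
    have : H = ⊤ := by
      rw [eq_top_iff, ← hcl, Subgroup.closure_le]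
      exact fun x hx => hH x hx
    exact (hcs hHc).2 this
  obtain ⟨M, hcommM, hMmax⟩ := hzorn
  have hMne : M ≠ ⊤ := hMmax.1.2
  have hMnormal : M.Normal := by
    constructor
    intro a ha g
    have hrw : g * a * g⁻¹ = a * ⁅a⁻¹, g⁆ := by
      simp only [commutatorElement_def]
      group
    rw [hrw]
    refine M.mul_mem ha (hcommM ?_)
    rw [commutator_def]
    exact Subgroup.commutator_mem_commutator (Subgroup.mem_top _) (Subgroup.mem_top _)
  refine ⟨M, hMne, hMnormal, ?_⟩
  -- every subgroup of the quotient is ⊥ or ⊤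
  have hQsub : ∀ K : Subgroup (G ⧸ M), K = ⊥ ∨ K = ⊤ := by
    intro K
    set H : Subgroup G := K.comap (QuotientGroup.mk' M) with hH
    have hMH : M ≤ H := by
      intro x hx
      simp only [hH, Subgroup.mem_comap]
      have : QuotientGroup.mk' M x = 1 := (QuotientGroup.eq_one_iff x).2 hx
      rw [this]; exact K.one_mem
    have hKmap : K = H.map (QuotientGroup.mk' M) :=
      (Subgroup.map_comap_eq_self_of_surjective (QuotientGroup.mk'_surjective M) K).symm
    by_cases hHtop : H = ⊤
    · right
      rw [hKmap, hHtop]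
      exact Subgroup.map_top_of_surjective _ (QuotientGroup.mk'_surjective M)
    · left
      have hHM : H = M := by
        rcases eq_or_lt_of_le hMH with h | h
        · exact h.symm
        · exact absurd (hMmax.2 ⟨le_trans hcommM (le_of_lt h), hHtop⟩ (le_of_lt h)) (by
            intro hle
            exact absurd (le_antisymm hle (le_of_lt h)) (ne_of_gt h))
      rw [hKmap, hHM, eq_bot_iff]
      rintro x ⟨g, hg, rfl⟩
      simpa [Subgroup.mem_bot] using (QuotientGroup.eq_one_iff g).2 hg
  -- the quotient is nontrivial
  obtain ⟨g₀, hg₀⟩ : ∃ g₀ : G, g₀ ∉ M := by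
    by_contra h
    push_neg at h
    exact hMne (eq_top_iff.2 fun x _ => h x)
  set g : G ⧸ M := QuotientGroup.mk g₀ with hg
  have hg1 : g ≠ 1 := fun h => hg₀ ((QuotientGroup.eq_one_iff g₀).1 h)
  have hzp : Subgroup.zpowers g = ⊤ :=
    (hQsub _).resolve_left (by simpa [Subgroup.zpowers_eq_bot] using hg1)
  have hfin : IsOfFinOrder g := by
    by_contra hinf
    have hg2 : g * g ≠ 1 := by
      intro h
      exact hinf (isOfFinOrder_iff_pow_eq_one.2 ⟨2, by omega, by rwa [pow_two]⟩)
    have hzp2 : Subgroup.zpowers (g * g) = ⊤ :=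
      (hQsub _).resolve_left (by simpa [Subgroup.zpowers_eq_bot] using hg2)
    have hgmem : g ∈ Subgroup.zpowers (g * g) := hzp2 ▸ Subgroup.mem_top g
    obtain ⟨k, hk⟩ := Subgroup.mem_zpowers_iff.1 hgmem
    have hgg : g ^ (2 : ℤ) = g * g := zpow_two g
    have hkey : g ^ (2 * k : ℤ) = g ^ (1 : ℤ) := by
      rw [zpow_mul, hgg, hk, zpow_one]
    have hinj := injective_zpow_iff_not_isOfFinOrder.2 hinf
    have : (2 * k : ℤ) = 1 := hinj hkey
    omega
  have h1 : (Subgroup.zpowers g : Set (G ⧸ M)).Finite := finite_zpowers.2 hfin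
  rw [hzp, Subgroup.coe_top, Set.finite_univ_iff] at h1
  exact h1

/-- Every minimal non-sofic group is perfect: it equals its commutator subgroup. -/
theorem minimalNonSofic_perfect (G : Type*) [Group G] (hG : IsMinimalNonSofic G) :
    commutator G = ⊤ := by
  by_contra hne
  apply hG.1
  intro F ε hε
  by_cases hcl : Subgroup.closure (F : Set G) = ⊤
  · obtain ⟨M, hMne, hMnormal, hfin⟩ := exists_finite_quotient F hcl hne
    haveI := hMnormal
    haveI := hfin
    exact isSofic_of_normal M (hG.2 M hMne) F ε hε
  · exact exists_approx_of_subgroup _ (hG.2 _ hcl) F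
      (fun g hg => Subgroup.subset_closure hg) ε hε
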